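/- Let (ψ, φ) extend an automaton on finite sets Q, S ⊂ ℝ and be (δ, μ)-stable with 0 < δ < 1 and 0 ≤ μ < 1. Let k ∈ S^ℕ, q ∈ Q^ℕ and x, y ∈ ℝ^ℕ satisfy |x_i − k_i| < δ and |y^j − q^j| < δ for all i, j. Let (x(i,j), y(i,j)) be the state dynamics for (ψ, φ) with initial data (x_i), (y^j), and (k(i,j), q(i,j)) the state dynamics for (ψ, φ) with initial data (k_i), (q^j). Then |x(i,j) − k(i,j)| < δ and |y(i,j) − q(i,j)| < δ for all i, j ≥ 0. -/
import Mathlib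


/-- a `(δ, μ)`-stable extension of an automaton keeps real orbits within
distance `δ` of automaton orbits, provided the initial data are within distance `δ`. -/
theorem statement14 (α β : ℕ) (Q S : Finset ℝ) (δ μ : ℝ)
    (hδ0 : 0 < δ) (hδ1 : δ < 1) (hμ0 : 0 ≤ μ) (hμ1 : μ < 1)
    (ψ : (Fin (α + 2) → ℝ) → ℝ) (φ : (Fin (β + 2) → ℝ) → ℝ)
    (hext1 : ∀ (q : ℝ) (s : Fin (α + 1) → ℝ), q ∈ Q → (∀ k, s k ∈ S) →
      ψ (Fin.cons q s) ∈ S)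
    (hext2 : ∀ (q : ℝ) (s : Fin (β + 1) → ℝ), q ∈ Q → (∀ k, s k ∈ S) →
      φ (Fin.cons q s) ∈ Q)
    (hstab1 : ∀ (q : ℝ) (s : Fin (α + 1) → ℝ), q ∈ Q → (∀ k, s k ∈ S) →
      ∀ v : Fin (α + 2) → ℝ, dist v (Fin.cons q s) < δ →
        |ψ v - ψ (Fin.cons q s)| ≤ μ * dist v (Fin.cons q s))
    (hstab2 : ∀ (q : ℝ) (s : Fin (β + 1) → ℝ), q ∈ Q → (∀ k, s k ∈ S) →
      ∀ v : Fin (β + 2) → ℝ, dist v (Fin.cons q s) < δ →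
        |φ v - φ (Fin.cons q s)| ≤ μ * dist v (Fin.cons q s))
    (k0 q0 : ℕ → ℝ) (hk0 : ∀ i, k0 i ∈ S) (hq0 : ∀ j, q0 j ∈ Q)
    (x0 y0 : ℕ → ℝ) (hx0 : ∀ i, |x0 i - k0 i| < δ) (hy0 : ∀ j, |y0 j - q0 j| < δ)
    (x y K Qd : ℕ → ℕ → ℝ)
    (hxinit : ∀ i, x i 0 = x0 i) (hyinit : ∀ j, y 0 j = y0 j)
    (hx : ∀ i j, x i (j + 1) = ψ (Fin.cons (y i j) (fun k : Fin (α + 1) => x (i + (k : ℕ)) j)))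
    (hy : ∀ i j, y (i + 1) j = φ (Fin.cons (y i j) (fun k : Fin (β + 1) => x (i + (k : ℕ)) j)))
    (hKinit : ∀ i, K i 0 = k0 i) (hQdinit : ∀ j, Qd 0 j = q0 j)
    (hK : ∀ i j, K i (j + 1) = ψ (Fin.cons (Qd i j) (fun k : Fin (α + 1) => K (i + (k : ℕ)) j)))
    (hQd : ∀ i j, Qd (i + 1) j = φ (Fin.cons (Qd i j) (fun k : Fin (β + 1) => K (i + (k : ℕ)) j))) :
    ∀ i j : ℕ, |x i j - K i j| < δ ∧ |y i j - Qd i j| < δ := by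
  have qpart : ∀ j, (∀ i, K i j ∈ S ∧ |x i j - K i j| < δ) →
      ∀ i, Qd i j ∈ Q ∧ |y i j - Qd i j| < δ := by
    intro j ih i
    induction i with
    | zero =>
      rw [hQdinit, hyinit]; exact ⟨hq0 j, hy0 j⟩
    | succ i ihq =>
      have hdist : dist
          (Fin.cons (y i j) (fun k : Fin (β + 1) => x (i + (k : ℕ)) j) : Fin (β + 2) → ℝ)
          (Fin.cons (Qd i j) (fun k : Fin (β + 1) => K (i + (k : ℕ)) j) : Fin (β + 2) → ℝ)
          < δ := by
        rw [dist_pi_lt_iff hδ0]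
        intro b
        refine Fin.cases ?_ ?_ b
        · simpa [Real.dist_eq] using ihq.2
        · intro m; simpa [Real.dist_eq] using (ih (i + m)).2
      refine ⟨?_, ?_⟩
      · rw [hQd]; exact hext2 _ _ ihq.1 (fun k => (ih (i + k)).1)
      · rw [hy, hQd]
        exact (hstab2 _ _ ihq.1 (fun k => (ih (i + k)).1) _ hdist).trans_lt
          (lt_of_le_of_lt (mul_le_of_le_one_left dist_nonneg hμ1.le) hdist)
  have key : ∀ j i, K i j ∈ S ∧ |x i j - K i j| < δ := by
    intro j
    induction j with
    | zero =>
      intro i; rw [hKinit, hxinit]; exact ⟨hk0 i, hx0 i⟩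
    | succ j ih =>
      intro i
      have hq := qpart j ih
      have hdist : dist
          (Fin.cons (y i j) (fun k : Fin (α + 1) => x (i + (k : ℕ)) j) : Fin (α + 2) → ℝ)
          (Fin.cons (Qd i j) (fun k : Fin (α + 1) => K (i + (k : ℕ)) j) : Fin (α + 2) → ℝ)
          < δ := by
        rw [dist_pi_lt_iff hδ0]
        intro b
        refine Fin.cases ?_ ?_ b
        · simpa [Real.dist_eq] using (hq i).2
        · intro m; simpa [Real.dist_eq] using (ih (i + m)).2
      refine ⟨?_, ?_⟩
      · rw [hK]; exact hext1 _ _ (hq i).1 (fun k => (ih (i + k)).1)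
      · rw [hx, hK]
        exact (hstab1 _ _ (hq i).1 (fun k => (ih (i + k)).1) _ hdist).trans_lt
          (lt_of_le_of_lt (mul_le_of_le_one_left dist_nonneg hμ1.le) hdist)
  exact fun i j => ⟨(key j i).2, (qpart j (key j) i).2⟩
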